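/- arXiv:1202.4696 — 4 statements merged into one kernel-verified Lean document; each statement's English description precedes it below -/
import Mathlib

section
/- Let r > 0, z ∈ (0,1), and u, v ≥ 0. Then ∑_{k=0}^∞ e^{−u·k} · Γ(r+k)/(Γ(r)·k!) · (1−z)^r · z^k · (1 + z·v)^{−(r+k)} = (1 + z·(1−e^{−u}+v)/(1−z))^{−r}. Equivalently, if N is negative binomial with weights nb_{r,z} and, conditionally on N = k, λ is Γ(r+k, 1/z)-distributed, then E[e^{−u·N − v·λ}] = (1 + z·(1−e^{−u}+v)/(1−z))^{−r}. -/
open Real MeasureTheory Set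

lemma negbinom_aux_exp (y : ℝ) : Real.exp y = ∑' n : ℕ, y ^ n / n.factorial := by
  rw [Real.exp_eq_exp_ℝ, NormedSpace.exp_eq_tsum_div]

lemma negbinom_series {r x : ℝ} (hr : 0 < r) (hx0 : 0 ≤ x) (hx1 : x < 1) :
    ∑' k : ℕ, Real.Gamma (r + k) / (Real.Gamma r * (Nat.factorial k)) * x ^ k
      = (1 - x) ^ (-r) := by
  have h1x : 0 < 1 - x := by linarith
  set a : ℕ → ℝ := fun k => Real.Gamma (r + k) * (x ^ k / (Nat.factorial k)) with ha
  have hank : ∀ k, 0 ≤ a k := by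
    intro k
    have : 0 < r + k := by positivity
    have := Real.Gamma_pos_of_pos this
    positivity
  -- the value of each Gamma integral
  have hGk : ∀ k : ℕ, a k = ∫ t in Ioi (0 : ℝ),
      Real.exp (-t) * t ^ (r + k - 1) * (x ^ k / (Nat.factorial k)) := by
    intro k
    have hrk : 0 < r + k := by positivity
    rw [integral_mul_const, ← Real.Gamma_eq_integral hrk, ha]
  have hint : ∀ k : ℕ, IntegrableOn
      (fun t : ℝ => Real.exp (-t) * t ^ (r + k - 1) * (x ^ k / (Nat.factorial k)))
      (Ioi (0 : ℝ)) := by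
    intro k
    have hrk : 0 < r + k := by positivity
    exact (Real.GammaIntegral_convergent hrk).mul_const _
  -- key identity in ℝ≥0∞
  have key : ∑' k : ℕ, ENNReal.ofReal (a k)
      = ENNReal.ofReal ((1 / (1 - x)) ^ r * Real.Gamma r) := by
    have step1 : ∀ k : ℕ, ENNReal.ofReal (a k) = ∫⁻ t in Ioi (0 : ℝ),
        ENNReal.ofReal (Real.exp (-t) * t ^ (r + k - 1) * (x ^ k / (Nat.factorial k))) := by
      intro k
      rw [hGk k]
      refine ofReal_integral_eq_lintegral_ofReal (hint k) ?_
      refine Filter.eventually_of_mem (self_mem_ae_restrict measurableSet_Ioi) ?_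
      intro t ht
      have ht0 : (0 : ℝ) < t := ht
      positivity
    have step2 : ∑' k : ℕ, ∫⁻ t in Ioi (0 : ℝ),
        ENNReal.ofReal (Real.exp (-t) * t ^ (r + k - 1) * (x ^ k / (Nat.factorial k)))
        = ∫⁻ t in Ioi (0 : ℝ), ∑' k : ℕ,
        ENNReal.ofReal (Real.exp (-t) * t ^ (r + k - 1) * (x ^ k / (Nat.factorial k))) := by
      refine (lintegral_tsum fun k => ?_).symm
      apply Measurable.aemeasurable
      apply ENNReal.measurable_ofReal.comp
      fun_prop
    have step3 : ∀ t ∈ Ioi (0 : ℝ), ∑' k : ℕ,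
        ENNReal.ofReal (Real.exp (-t) * t ^ (r + k - 1) * (x ^ k / (Nat.factorial k)))
        = ENNReal.ofReal (t ^ (r - 1) * Real.exp (-((1 - x) * t))) := by
      intro t ht
      have ht0 : (0 : ℝ) < t := ht
      have hterm : ∀ k : ℕ, Real.exp (-t) * t ^ (r + k - 1) * (x ^ k / (Nat.factorial k))
          = (Real.exp (-t) * t ^ (r - 1)) * ((x * t) ^ k / (Nat.factorial k)) := by
        intro k
        have h1 : t ^ (r + (k : ℝ) - 1) = t ^ (r - 1) * t ^ (k : ℕ) := by
          rw [show r + (k : ℝ) - 1 = (r - 1) + (k : ℝ) by ring, Real.rpow_add ht0,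
            Real.rpow_natCast]
        rw [h1, mul_pow]
        ring
      simp_rw [hterm]
      rw [← ENNReal.ofReal_tsum_of_nonneg
        (fun k => by positivity)
        ((Real.summable_pow_div_factorial (x * t)).mul_left _),
        tsum_mul_left, ← negbinom_aux_exp]
      congr 1
      rw [show -((1 - x) * t) = -t + x * t by ring, Real.exp_add]
      ring
    have step4 : ∫⁻ t in Ioi (0 : ℝ),
        ENNReal.ofReal (t ^ (r - 1) * Real.exp (-((1 - x) * t)))
        = ENNReal.ofReal ((1 / (1 - x)) ^ r * Real.Gamma r) := by
      have hi : IntegrableOn (fun t : ℝ => t ^ (r - 1) * Real.exp (-((1 - x) * t)))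
          (Ioi (0 : ℝ)) := by
        have h := integrableOn_rpow_mul_exp_neg_mul_rpow (p := 1) (s := r - 1) (b := 1 - x)
          (by linarith) one_pos h1x
        refine h.congr_fun (fun t _ => ?_) measurableSet_Ioi
        dsimp only; rw [Real.rpow_one, neg_mul]
      rw [← ofReal_integral_eq_lintegral_ofReal hi ?_]
      · rw [Real.integral_rpow_mul_exp_neg_mul_Ioi hr h1x]
      · refine Filter.eventually_of_mem (self_mem_ae_restrict measurableSet_Ioi) ?_
        intro t ht
        have ht0 : (0 : ℝ) < t := ht
        positivity
    calc ∑' k : ℕ, ENNReal.ofReal (a k)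
        = ∑' k : ℕ, ∫⁻ t in Ioi (0 : ℝ),
            ENNReal.ofReal (Real.exp (-t) * t ^ (r + k - 1) * (x ^ k / (Nat.factorial k))) :=
          tsum_congr step1
      _ = ∫⁻ t in Ioi (0 : ℝ), ∑' k : ℕ,
            ENNReal.ofReal (Real.exp (-t) * t ^ (r + k - 1) * (x ^ k / (Nat.factorial k))) :=
          step2
      _ = ∫⁻ t in Ioi (0 : ℝ),
            ENNReal.ofReal (t ^ (r - 1) * Real.exp (-((1 - x) * t))) := by
          refine setLIntegral_congr_fun measurableSet_Ioi ?_
          exact step3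
      _ = ENNReal.ofReal ((1 / (1 - x)) ^ r * Real.Gamma r) := step4
  -- pass back to ℝ
  have hts : ∑' k, a k = (1 / (1 - x)) ^ r * Real.Gamma r := by
    calc ∑' k, a k = ∑' k, (ENNReal.ofReal (a k)).toReal :=
          tsum_congr fun k => (ENNReal.toReal_ofReal (hank k)).symm
      _ = (∑' k, ENNReal.ofReal (a k)).toReal :=
          (ENNReal.tsum_toReal_eq fun k => ENNReal.ofReal_ne_top).symm
      _ = (1 / (1 - x)) ^ r * Real.Gamma r := by
          rw [key]
          refine ENNReal.toReal_ofReal ?_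
          have := Real.Gamma_pos_of_pos hr
          positivity
  have hG0 : Real.Gamma r ≠ 0 := (Real.Gamma_pos_of_pos hr).ne'
  calc ∑' k : ℕ, Real.Gamma (r + k) / (Real.Gamma r * (Nat.factorial k)) * x ^ k
      = ∑' k : ℕ, (Real.Gamma r)⁻¹ * a k := by
        refine tsum_congr fun k => ?_
        have hk : (Nat.factorial k : ℝ) ≠ 0 := Nat.cast_ne_zero.mpr k.factorial_ne_zero
        field_simp; simp only [a]; field_simp
    _ = (Real.Gamma r)⁻¹ * ∑' k, a k := tsum_mul_left
    _ = (1 / (1 - x)) ^ r := by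
        rw [hts]
        field_simp
    _ = (1 - x) ^ (-r) := by
        rw [one_div, ← Real.rpow_neg_one (1 - x), ← Real.rpow_mul h1x.le]
        norm_num

/-- Joint Laplace transform of a negative binomial observation and its
conditionally `Γ(r+k, 1/z)`-distributed intensity: for `r > 0`, `z ∈ (0,1)` and
`u, v ≥ 0`,
`∑_k e^{−u·k} · nb_{r,z}(k) · (1 + z·v)^{−(r+k)} = (1 + z·(1−e^{−u}+v)/(1−z))^{−r}`. -/
theorem stmt_10 (r z u v : ℝ) (hr : 0 < r) (hz : z ∈ Set.Ioo (0 : ℝ) 1)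
    (hu : 0 ≤ u) (hv : 0 ≤ v) :
    ∑' k : ℕ, Real.exp (-(u * k)) *
        (Real.Gamma (r + k) / (Real.Gamma r * Nat.factorial k) * (1 - z) ^ r * z ^ k) *
        (1 + z * v) ^ (-(r + k)) =
      (1 + z * (1 - Real.exp (-u) + v) / (1 - z)) ^ (-r) := by
  obtain ⟨hz0, hz1⟩ := hz
  have h1z : 0 < 1 - z := by linarith
  set A : ℝ := 1 + z * v with hA
  have hA1 : (1 : ℝ) ≤ A := by nlinarith
  have hA0 : 0 < A := by linarith
  set E : ℝ := Real.exp (-u) with hE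
  have hE0 : 0 < E := Real.exp_pos _
  have hE1 : E ≤ 1 := Real.exp_le_one_iff.mpr (by linarith)
  set x : ℝ := z * E / A with hx
  have hx0 : 0 ≤ x := by positivity
  have hx1 : x < 1 := by
    rw [hx, div_lt_one hA0]
    nlinarith
  -- rewrite each term
  have hterm : ∀ k : ℕ, Real.exp (-(u * k)) *
      (Real.Gamma (r + k) / (Real.Gamma r * Nat.factorial k) * (1 - z) ^ r * z ^ k) *
      A ^ (-(r + k))
      = ((1 - z) ^ r * A ^ (-r)) *
        (Real.Gamma (r + k) / (Real.Gamma r * Nat.factorial k) * x ^ k) := by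
    intro k
    have h1 : Real.exp (-(u * k)) = E ^ k := by
      rw [hE, ← Real.exp_nat_mul]
      congr 1
      ring
    have h2 : A ^ (-(r + (k : ℝ))) = A ^ (-r) * (A⁻¹) ^ k := by
      rw [show -(r + (k : ℝ)) = -r + -(k : ℝ) by ring, Real.rpow_add hA0,
        Real.rpow_neg hA0.le, Real.rpow_neg hA0.le, Real.rpow_natCast, inv_pow]
    have h3 : x ^ k = z ^ k * E ^ k * (A⁻¹) ^ k := by
      rw [hx, div_eq_mul_inv, ← mul_pow, ← mul_pow]
    rw [h1, h2, h3]
    ring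
  rw [tsum_congr hterm, tsum_mul_left, negbinom_series hr hx0 hx1]
  -- final algebra with rpow
  have hAx : 1 - x = (A - z * E) / A := by
    rw [hx]
    field_simp
  have hB0 : 0 < A - z * E := by nlinarith
  have hRHS : 1 + z * (1 - E + v) / (1 - z) = (A - z * E) / (1 - z) := by
    rw [hA]
    field_simp
    ring
  rw [hAx, hRHS]
  rw [Real.rpow_neg hA0.le, Real.rpow_neg (by positivity),
    Real.rpow_neg (by positivity), Real.div_rpow hB0.le hA0.le,
    Real.div_rpow hB0.le h1z.le]
  have hA' : A ^ r ≠ 0 := (Real.rpow_pos_of_pos hA0 r).ne'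
  have hB' : (A - z * E) ^ r ≠ 0 := (Real.rpow_pos_of_pos hB0 r).ne'
  have h1z' : (1 - z) ^ r ≠ 0 := (Real.rpow_pos_of_pos h1z r).ne'
  field_simp
end

section
/- Let r > 0, z ∈ (0,1) and let f : ℕ → [0,∞) be any function. Then ∑_{k=0}^∞ k · f(k) · nb_{r,z}(k) = z · ∑_{k=0}^∞ (r+k) · f(k+1) · nb_{r,z}(k). -/
open Real ENNReal

set_option maxHeartbeats 1000000 in

/-- One-dimensional Zessin integration-by-parts formula for the negative binomial
(Pólya) weights `nb_{r,z}(k) = Γ(r+k)/(Γ(r)·k!) · (1−z)^r · z^k`: for any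
`f : ℕ → [0,∞)`,
`∑_k k · f(k) · nb_{r,z}(k) = z · ∑_k (r+k) · f(k+1) · nb_{r,z}(k)`. -/
theorem stmt_12 (r z : ℝ) (hr : 0 < r) (hz : z ∈ Set.Ioo (0 : ℝ) 1) (f : ℕ → ℝ≥0∞) :
    ∑' k : ℕ, (k : ℝ≥0∞) * f k *
        ENNReal.ofReal
          (Real.Gamma (r + k) / (Real.Gamma r * Nat.factorial k) * (1 - z) ^ r * z ^ k) =
      ENNReal.ofReal z *
        ∑' k : ℕ, ENNReal.ofReal (r + k) * f (k + 1) *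
          ENNReal.ofReal
            (Real.Gamma (r + k) / (Real.Gamma r * Nat.factorial k) *
              (1 - z) ^ r * z ^ k) := by
  obtain ⟨hz0, hz1⟩ := hz
  rw [← ENNReal.tsum_mul_left, tsum_eq_zero_add' ENNReal.summable]
  simp only [Nat.cast_zero, zero_mul]
  rw [zero_add]
  refine tsum_congr fun k => ?_
  have hrk : (0:ℝ) < r + k := by positivity
  have hA : Real.Gamma (r + ↑(k + 1)) / (Real.Gamma r * Nat.factorial (k + 1)) *
      (1 - z) ^ r * z ^ (k + 1) * (k + 1)
      = z * ((r + k) * (Real.Gamma (r + k) / (Real.Gamma r * Nat.factorial k) *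
        (1 - z) ^ r * z ^ k)) := by
    have hG : Real.Gamma (r + ↑(k + 1)) = (r + k) * Real.Gamma (r + k) := by
      have : r + ↑(k + 1) = (r + k) + 1 := by push_cast; ring
      rw [this, Real.Gamma_add_one hrk.ne']
    rw [hG, Nat.factorial_succ]
    have hfac : (0:ℝ) < Nat.factorial k := by positivity
    field_simp
    push_cast
    ring
  have hnb : (0:ℝ) ≤ Real.Gamma (r + k) / (Real.Gamma r * Nat.factorial k) *
      (1 - z) ^ r * z ^ k := by
    have h1 : (0:ℝ) < Real.Gamma (r + k) := Real.Gamma_pos_of_pos hrk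
    have h2 : (0:ℝ) < Real.Gamma r := Real.Gamma_pos_of_pos hr
    have h3 : (0:ℝ) < (1 - z) ^ r := Real.rpow_pos_of_pos (by linarith) r
    positivity
  calc (↑(k + 1) : ℝ≥0∞) * f (k + 1) *
        ENNReal.ofReal (Real.Gamma (r + ↑(k + 1)) / (Real.Gamma r * Nat.factorial (k + 1)) *
          (1 - z) ^ r * z ^ (k + 1))
      = f (k + 1) * ENNReal.ofReal (Real.Gamma (r + ↑(k + 1)) /
          (Real.Gamma r * Nat.factorial (k + 1)) * (1 - z) ^ r * z ^ (k + 1) * (k + 1)) := by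
        have hc : ((k : ℝ≥0∞) + 1) = ENNReal.ofReal ((k : ℝ) + 1) := by
          rw [ENNReal.ofReal_add (by positivity) zero_le_one, ENNReal.ofReal_natCast,
            ENNReal.ofReal_one]
        push_cast
        rw [hc, ENNReal.ofReal_mul' (by positivity : (0:ℝ) ≤ (k:ℝ) + 1)]
        ring
    _ = f (k + 1) * ENNReal.ofReal (z * ((r + k) * (Real.Gamma (r + k) /
          (Real.Gamma r * Nat.factorial k) * (1 - z) ^ r * z ^ k))) := by rw [hA]
    _ = ENNReal.ofReal z * (ENNReal.ofReal (r + k) * f (k + 1) *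
          ENNReal.ofReal (Real.Gamma (r + k) / (Real.Gamma r * Nat.factorial k) *
            (1 - z) ^ r * z ^ k)) := by
        rw [ENNReal.ofReal_mul hz0.le, ENNReal.ofReal_mul hrk.le]
        ring
end

section
/- Let r > 0 and z ∈ (0,1). If p : ℕ → [0,∞) satisfies ∑_{k=0}^∞ p(k) = 1 and the recursion (k+1)·p(k+1) = z·(r+k)·p(k) for all k ∈ ℕ, then p(k) = Γ(r+k)/(Γ(r)·k!) · (1−z)^r · z^k for every k ∈ ℕ. -/
open Real

/-- coefficient of the negative binomial series -/
noncomputable def nbc (r : ℝ) (k : ℕ) : ℝ :=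
  Real.Gamma (r + k) / (Real.Gamma r * Nat.factorial k)

lemma nbc_pos {r : ℝ} (hr : 0 < r) (k : ℕ) : 0 < nbc r k := by
  have h1 : (0:ℝ) < r + k := by positivity
  exact div_pos (Real.Gamma_pos_of_pos h1)
    (mul_pos (Real.Gamma_pos_of_pos hr) (by exact_mod_cast k.factorial_pos))

lemma nbc_zero {r : ℝ} (hr : 0 < r) : nbc r 0 = 1 := by
  have := (Real.Gamma_pos_of_pos hr).ne'
  simp [nbc, this]

lemma nbc_succ {r : ℝ} (hr : 0 < r) (k : ℕ) :
    ((k:ℝ) + 1) * nbc r (k + 1) = (r + k) * nbc r k := by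
  have h1 : (0:ℝ) < r + k := by positivity
  have hG : Real.Gamma (r + k + 1) = (r + k) * Real.Gamma (r + k) :=
    Real.Gamma_add_one h1.ne'
  have hc : (Nat.factorial (k+1) : ℝ) = ((k:ℝ)+1) * Nat.factorial k := by
    push_cast [Nat.factorial_succ]; ring
  have hΓr : Real.Gamma r ≠ 0 := (Real.Gamma_pos_of_pos hr).ne'
  have hfk : (Nat.factorial k : ℝ) ≠ 0 := by exact_mod_cast k.factorial_pos.ne'
  have hk1 : ((k:ℝ)+1) ≠ 0 := by positivity
  simp only [nbc]
  rw [show r + ((k:ℕ)+1 : ℕ) = r + k + 1 by push_cast; ring, hG, hc]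
  field_simp

/-- Summability of `(r+n) * nbc r n * t^n` for `0 ≤ t < 1`, by the ratio test. -/
lemma nbc_summable_aux {r : ℝ} (hr : 0 < r) {t : ℝ} (ht0 : 0 ≤ t) (ht1 : t < 1) :
    Summable (fun n : ℕ => (r + n) * nbc r n * t ^ n) := by
  set d : ℕ → ℝ := fun n => (r + n) * nbc r n * t ^ n with hd
  have hdnn : ∀ n, 0 ≤ d n := fun n => by
    have : (0:ℝ) < r + n := by positivity
    exact mul_nonneg (mul_nonneg this.le (nbc_pos hr n).le) (pow_nonneg ht0 n)
  set l : ℝ := (t + 1) / 2 with hl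
  have hlt : t < l := by rw [hl]; linarith
  have hl1 : l < 1 := by rw [hl]; linarith
  refine summable_of_ratio_norm_eventually_le hl1 ?_
  rw [Filter.eventually_atTop]
  refine ⟨Nat.ceil ((t * (r + 1)) / (l - t)), fun n hn => ?_⟩
  have hlin : t * (r + (n:ℝ) + 1) ≤ l * ((n:ℝ) + 1) := by
    have hlt' : (0:ℝ) < l - t := by linarith
    have h1 : (t * (r + 1)) / (l - t) ≤ (n : ℝ) :=
      le_trans (Nat.le_ceil _) (by exact_mod_cast hn)
    have h2 : t * (r + 1) ≤ (l - t) * n := by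
      rw [div_le_iff₀ hlt'] at h1; linarith [h1]
    nlinarith
  have hrec : ((n:ℝ) + 1) * d (n + 1) = t * (r + (n:ℝ) + 1) * d n := by
    simp only [hd]
    push_cast
    calc ((n:ℝ) + 1) * ((r + ((n:ℝ)+1)) * nbc r (n+1) * t ^ (n+1))
        = (r + ((n:ℝ)+1)) * (((n:ℝ)+1) * nbc r (n+1)) * t ^ (n+1) := by ring
      _ = (r + ((n:ℝ)+1)) * ((r + n) * nbc r n) * t ^ (n+1) := by rw [nbc_succ hr]
      _ = t * (r + (n:ℝ) + 1) * ((r + (n:ℝ)) * nbc r n * t ^ n) := by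
          rw [pow_succ]; ring
  have hk1 : (0:ℝ) < (n:ℝ) + 1 := by positivity
  rw [Real.norm_eq_abs, Real.norm_eq_abs, abs_of_nonneg (hdnn _), abs_of_nonneg (hdnn _)]
  have : ((n:ℝ) + 1) * d (n + 1) ≤ ((n:ℝ) + 1) * (l * d n) := by
    rw [hrec]
    calc t * (r + (n:ℝ) + 1) * d n ≤ l * ((n:ℝ) + 1) * d n := by
          exact mul_le_mul_of_nonneg_right hlin (hdnn n)
      _ = ((n:ℝ) + 1) * (l * d n) := by ring
  exact le_of_mul_le_mul_left this hk1

/-- The negative binomial series sums to `(1-z)^(-r)`. -/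
lemma nbc_tsum {r z : ℝ} (hr : 0 < r) (hz : z ∈ Set.Ioo (0:ℝ) 1) :
    (1 - z) ^ r * ∑' n : ℕ, nbc r n * z ^ n = 1 := by
  obtain ⟨hz0, hz1⟩ := hz
  set t0 : ℝ := (z + 1) / 2 with ht0def
  have hzt0 : z < t0 := by rw [ht0def]; linarith
  have ht01 : t0 < 1 := by rw [ht0def]; linarith
  have ht00 : 0 < t0 := by rw [ht0def]; linarith
  -- the bound sequence for derivatives
  set u : ℕ → ℝ := fun n => nbc r n * (n * t0 ^ (n - 1)) with hu_def
  have hu : Summable u := by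
    rw [← summable_nat_add_iff 1]
    have : (fun n : ℕ => u (n + 1)) = fun n : ℕ => (r + n) * nbc r n * t0 ^ n := by
      funext n
      simp only [hu_def, Nat.add_sub_cancel]
      push_cast
      calc nbc r (n+1) * (((n:ℝ)+1) * t0 ^ n)
          = (((n:ℝ)+1) * nbc r (n+1)) * t0 ^ n := by ring
        _ = (r + n) * nbc r n * t0 ^ n := by rw [nbc_succ hr]
    rw [this]
    exact nbc_summable_aux hr ht00.le ht01
  -- derivative bound
  have hg' : ∀ (n : ℕ) (y : ℝ), y ∈ Set.Ioo (-t0) t0 →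
      ‖nbc r n * ((n:ℝ) * y ^ (n - 1))‖ ≤ u n := by
    intro n y hy
    have hyabs : |y| ≤ t0 := abs_le.2 ⟨hy.1.le, hy.2.le⟩
    rw [Real.norm_eq_abs, abs_mul, abs_mul, abs_of_nonneg (nbc_pos hr n).le,
      abs_of_nonneg (by positivity : (0:ℝ) ≤ (n:ℝ)), abs_pow]
    simp only [hu_def]
    have : |y| ^ (n-1) ≤ t0 ^ (n-1) := pow_le_pow_left₀ (abs_nonneg y) hyabs _
    have hnn : (0:ℝ) ≤ (n:ℝ) := by positivity
    exact mul_le_mul_of_nonneg_left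
      (mul_le_mul_of_nonneg_left this hnn) (nbc_pos hr n).le
  -- summability at 0
  have hg0 : Summable (fun n : ℕ => nbc r n * (0:ℝ) ^ n) := by
    apply summable_of_ne_finset_zero (s := {0})
    intro n hn
    have : n ≠ 0 := by simpa using hn
    simp [zero_pow this]
  -- derivative of the sum
  set f : ℝ → ℝ := fun x => ∑' n : ℕ, nbc r n * x ^ n with hf_def
  set D : ℝ → ℝ := fun y => ∑' n : ℕ, nbc r n * ((n:ℝ) * y ^ (n - 1)) with hD_def
  have hmem : ∀ x ∈ Set.Icc (0:ℝ) z, x ∈ Set.Ioo (-t0) t0 := by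
    intro x hx
    exact ⟨by linarith [hx.1], by linarith [hx.2]⟩
  have hf_deriv : ∀ y ∈ Set.Ioo (-t0) t0, HasDerivAt f (D y) y := by
    intro y hy
    exact hasDerivAt_tsum_of_isPreconnected hu isOpen_Ioo
      (isPreconnected_Ioo)
      (fun n x _ => (hasDerivAt_pow n x).const_mul (nbc r n))
      hg' (Set.mem_Ioo.2 ⟨by linarith, ht00⟩) hg0 hy
  -- summability of the various series
  have hD_sum : ∀ y ∈ Set.Ioo (-t0) t0,
      Summable (fun n : ℕ => nbc r n * ((n:ℝ) * y ^ (n - 1))) := by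
    intro y hy
    exact Summable.of_norm_bounded hu (fun n => hg' n y hy)
  have hf_sum : ∀ y ∈ Set.Ioo (-t0) t0, Summable (fun n : ℕ => nbc r n * y ^ n) := by
    intro y hy
    have hyabs : |y| ≤ t0 := abs_le.2 ⟨hy.1.le, hy.2.le⟩
    refine Summable.of_norm_bounded (g := fun n => r⁻¹ * ((r + n) * nbc r n * t0 ^ n))
      ((nbc_summable_aux hr ht00.le ht01).mul_left _) (fun n => ?_)
    rw [Real.norm_eq_abs, abs_mul, abs_of_nonneg (nbc_pos hr n).le, abs_pow]
    have h1 : |y| ^ n ≤ t0 ^ n := pow_le_pow_left₀ (abs_nonneg y) hyabs _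
    have h2 : nbc r n * |y| ^ n ≤ nbc r n * t0 ^ n :=
      mul_le_mul_of_nonneg_left h1 (nbc_pos hr n).le
    have h3 : nbc r n * t0 ^ n ≤ r⁻¹ * ((r + n) * nbc r n * t0 ^ n) := by
      rw [inv_mul_eq_div, le_div_iff₀ hr]
      have : (0:ℝ) ≤ nbc r n * t0 ^ n :=
        mul_nonneg (nbc_pos hr n).le (pow_nonneg ht00.le n)
      nlinarith [(Nat.cast_nonneg n : (0:ℝ) ≤ (n:ℝ))]
    linarith
  -- the key ODE identity
  have hkey : ∀ y ∈ Set.Ioo (-t0) t0, (1 - y) * D y = r * f y := by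
    intro y hy
    have hsum1 := hD_sum y hy
    have hsum2 := hf_sum y hy
    have hterm : ∀ m : ℕ, nbc r (m+1) * (((m:ℕ)+1 : ℕ) * y ^ ((m+1) - 1))
        = r * (nbc r m * y ^ m) + y * (nbc r m * ((m:ℝ) * y ^ (m - 1))) := by
      intro m
      have h1 : nbc r (m+1) * (((m:ℕ)+1 : ℕ) * y ^ ((m+1) - 1))
          = (((m:ℝ)+1) * nbc r (m+1)) * y ^ m := by
        push_cast [Nat.add_sub_cancel]; ring
      rw [h1, nbc_succ hr]
      cases m with
      | zero => simp
      | succ k =>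
        have hpow : y ^ (k + 1) = y * y ^ k := by rw [pow_succ]; ring
        push_cast [Nat.add_sub_cancel]
        rw [hpow]; ring
    have hshift : (∑' n : ℕ, nbc r n * ((n:ℝ) * y ^ (n - 1))) = ∑' m : ℕ,
        (r * (nbc r m * y ^ m) + y * (nbc r m * ((m:ℝ) * y ^ (m - 1)))) := by
      rw [hsum1.tsum_eq_zero_add]
      simp only [Nat.cast_zero, zero_mul, mul_zero, zero_add]
      exact tsum_congr fun m => hterm m
    have hEq : D y = r * f y + y * D y := by
      calc D y = ∑' n : ℕ, nbc r n * ((n:ℝ) * y ^ (n - 1)) := rfl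
        _ = ∑' m : ℕ,
            (r * (nbc r m * y ^ m) + y * (nbc r m * ((m:ℝ) * y ^ (m - 1)))) := hshift
        _ = (∑' m : ℕ, r * (nbc r m * y ^ m))
            + ∑' m : ℕ, y * (nbc r m * ((m:ℝ) * y ^ (m - 1))) :=
            (hsum2.mul_left r).tsum_add (hsum1.mul_left y)
        _ = r * f y + y * D y := by rw [tsum_mul_left, tsum_mul_left]
    linear_combination hEq
  -- the function (1-x)^r * f x has zero derivative on [0, z]
  set G : ℝ → ℝ := fun x => (1 - x) ^ r * f x with hG_def
  have hGderiv : ∀ x ∈ Set.Icc (0:ℝ) z, HasDerivAt G 0 x := by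
    intro x hx
    have hx' := hmem x hx
    have h1x : (0:ℝ) < 1 - x := by linarith [hx.2]
    have Hrpow : HasDerivAt (fun x : ℝ => (1 - x) ^ r)
        (r * (1 - x) ^ (r - 1) * (-1)) x := by
      have h := (Real.hasDerivAt_rpow_const (x := 1 - x) (p := r) (Or.inl h1x.ne'))
      have h2 : HasDerivAt (fun y : ℝ => 1 - y) (-1) x := by
        simpa using (hasDerivAt_id x).const_sub 1
      exact h.comp x h2
    have Hprod := Hrpow.mul (hf_deriv x hx')
    have heq : r * (1 - x) ^ (r - 1) * (-1) * f x + (1 - x) ^ r * D x = 0 := by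
      have hpow : (1 - x) ^ r = (1 - x) ^ (r - 1) * (1 - x) := by
        rw [← Real.rpow_add_one h1x.ne' (r - 1)]; ring_nf
      rw [hpow]
      have hk := hkey x hx'
      linear_combination (1 - x) ^ (r - 1) * hk
    rw [heq] at Hprod
    exact Hprod
  have hconst : G z = G 0 := by
    have := constant_of_has_deriv_right_zero
      (f := G) (a := 0) (b := z)
      (fun x hx => (hGderiv x hx).continuousAt.continuousWithinAt)
      (fun x hx => (hGderiv x (Set.Ico_subset_Icc_self hx)).hasDerivWithinAt)
    exact this z (Set.mem_Icc.2 ⟨hz0.le, le_refl z⟩)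
  have hG0 : G 0 = 1 := by
    have hf0 : f 0 = nbc r 0 := by
      have : f 0 = ∑' n : ℕ, nbc r n * (0:ℝ) ^ n := rfl
      rw [this, tsum_eq_single 0 (fun n hn => by simp [zero_pow hn])]
      simp
    have : G 0 = (1 - 0 : ℝ) ^ r * f 0 := rfl
    rw [this, hf0, nbc_zero hr]
    simp
  calc (1 - z) ^ r * ∑' n : ℕ, nbc r n * z ^ n = G z := rfl
    _ = G 0 := hconst
    _ = 1 := hG0

/-- Uniqueness of the negative binomial weights: if `p : ℕ → [0,∞)` sums to one
and satisfies the recursion `(k+1)·p(k+1) = z·(r+k)·p(k)`, then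
`p(k) = Γ(r+k)/(Γ(r)·k!) · (1−z)^r · z^k` for every `k`. -/
theorem stmt_13 (r z : ℝ) (hr : 0 < r) (hz : z ∈ Set.Ioo (0 : ℝ) 1)
    (p : ℕ → ℝ) (hp : ∀ k, 0 ≤ p k) (hsum : ∑' k : ℕ, p k = 1)
    (hrec : ∀ k : ℕ, (k + 1) * p (k + 1) = z * (r + k) * p k) :
    ∀ k : ℕ, p k =
      Real.Gamma (r + k) / (Real.Gamma r * Nat.factorial k) * (1 - z) ^ r * z ^ k := by
  obtain ⟨hz0, hz1⟩ := hz
  -- first, p k = p 0 * (nbc r k * z ^ k)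
  have hpk : ∀ k : ℕ, p k = p 0 * (nbc r k * z ^ k) := by
    intro k
    induction k with
    | zero => simp [nbc_zero hr]
    | succ k ih =>
      have hk1 : ((k:ℝ) + 1) ≠ 0 := by positivity
      apply mul_left_cancel₀ hk1
      rw [hrec k, ih]
      calc z * (r + k) * (p 0 * (nbc r k * z ^ k))
          = p 0 * (((r + k) * nbc r k) * z ^ (k+1)) := by rw [pow_succ]; ring
        _ = p 0 * ((((k:ℝ)+1) * nbc r (k+1)) * z ^ (k+1)) := by rw [nbc_succ hr]
        _ = ((k:ℝ) + 1) * (p 0 * (nbc r (k+1) * z ^ (k+1))) := by ring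
  have hS : p 0 * ∑' k : ℕ, nbc r k * z ^ k = 1 := by
    rw [← tsum_mul_left, ← hsum]
    exact tsum_congr fun k => (hpk k).symm
  have hT := nbc_tsum hr (Set.mem_Ioo.2 ⟨hz0, hz1⟩)
  have hp0 : p 0 = (1 - z) ^ r := by
    calc p 0 = p 0 * ((1 - z) ^ r * ∑' n : ℕ, nbc r n * z ^ n) := by
          rw [hT, mul_one]
      _ = (1 - z) ^ r * (p 0 * ∑' n : ℕ, nbc r n * z ^ n) := by ring
      _ = (1 - z) ^ r := by rw [hS, mul_one]
  intro k
  rw [hpk k, hp0, nbc]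
  ring
end

section
/- The map Φ(z, w) = (w·z/(1−z), −w·log(1−z)) is a bijection from (0,1) × (0,∞) onto the set {(u,v) ∈ ℝ² : 0 < v < u}. In particular, for all u, v with 0 < v < u there is a unique pair (z, w) ∈ (0,1) × (0,∞) solving w·z/(1−z) = u and −w·log(1−z) = v. -/
open Set

private noncomputable def gfun (t : ℝ) : ℝ := (Real.exp t - 1) / t

private lemma gfun_deriv {t : ℝ} (ht : 0 < t) :
    HasDerivAt gfun ((Real.exp t * t - (Real.exp t - 1) * 1) / t ^ 2) t := by
  have h1 : HasDerivAt (fun s => Real.exp s - 1) (Real.exp t) t :=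
    (Real.hasDerivAt_exp t).sub_const 1
  have h2 : HasDerivAt (fun s : ℝ => s) 1 t := hasDerivAt_id t
  exact h1.div h2 ht.ne'

private lemma gfun_strictMono : StrictMonoOn gfun (Ioi 0) := by
  apply strictMonoOn_of_deriv_pos (convex_Ioi 0)
  · exact fun t ht => ((gfun_deriv ht).continuousAt).continuousWithinAt
  · intro t ht
    rw [interior_Ioi] at ht
    have ht' : (0:ℝ) < t := ht
    rw [(gfun_deriv ht').deriv]
    have h := Real.add_one_lt_exp (x := -t) (neg_ne_zero.mpr ht'.ne')
    have he : Real.exp (-t) * Real.exp t = 1 := by rw [← Real.exp_add]; simp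
    have hp := Real.exp_pos t
    exact div_pos (by nlinarith) (pow_pos ht' 2)

private lemma gfun_surj {r : ℝ} (hr : 1 < r) : ∃ t, 0 < t ∧ gfun t = r := by
  set a := Real.log r / 2 with ha_def
  have hlr : 0 < Real.log r := Real.log_pos hr
  have ha : 0 < a := by positivity
  have hea : Real.exp a ^ 2 = r := by
    rw [← Real.exp_nsmul]
    simp only [nsmul_eq_mul, Nat.cast_ofNat, ha_def]
    rw [mul_div_cancel₀ _ (two_ne_zero)]
    exact Real.exp_log (by linarith)
  have hea1 : 1 < Real.exp a := Real.one_lt_exp_iff.mpr ha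
  have hear : Real.exp a < r := by nlinarith
  -- g a < r
  have hga : gfun a < r := by
    have h1 : Real.exp a - 1 ≤ a * Real.exp a := by
      have h := Real.add_one_le_exp (-a)
      have he : Real.exp (-a) * Real.exp a = 1 := by rw [← Real.exp_add]; simp
      nlinarith [Real.exp_pos a]
    have : gfun a ≤ Real.exp a := by
      rw [gfun, div_le_iff₀ ha]; nlinarith
    linarith
  set b := a + 4 * r with hb_def
  have hab : a ≤ b := by linarith
  have hb : 0 < b := by linarith
  have hgb : r < gfun b := by
    have h := Real.add_one_le_exp (b / 2)
    have he : Real.exp (b/2) ^ 2 = Real.exp b := by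
      rw [sq, ← Real.exp_add]; norm_num
    have hexp : 1 + b + b^2/4 ≤ Real.exp b := by nlinarith
    rw [gfun, lt_div_iff₀ hb]; nlinarith
  have hcont : ContinuousOn gfun (Icc a b) := by
    intro t htm
    exact ((gfun_deriv (lt_of_lt_of_le ha htm.1)).continuousAt).continuousWithinAt
  have : r ∈ Icc (gfun a) (gfun b) := ⟨hga.le, hgb.le⟩
  obtain ⟨t, htm, htr⟩ := intermediate_value_Icc hab hcont this
  exact ⟨t, lt_of_lt_of_le ha htm.1, htr⟩

/-- For `z ∈ (0,1)` with `t = -log(1-z)`: `z/(1-z) = exp t - 1`. -/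
private lemma key_eq {z : ℝ} (hz0 : 0 < z) (hz1 : z < 1) :
    z / (1 - z) = Real.exp (-Real.log (1 - z)) - 1 := by
  have h1 : (0:ℝ) < 1 - z := by linarith
  rw [Real.exp_neg, Real.exp_log h1]
  field_simp
  ring

/-- The map `Φ(z, w) = (w·z/(1−z), −w·log(1−z))` is a bijection from
`(0,1) × (0,∞)` onto `{(u,v) : 0 < v < u}`; in particular, for `0 < v < u`
there is a unique `(z,w) ∈ (0,1) × (0,∞)` with `w·z/(1−z) = u` and
`−w·log(1−z) = v`. -/
theorem stmt_14 :
    Set.BijOn (fun p : ℝ × ℝ => (p.2 * p.1 / (1 - p.1), -(p.2 * Real.log (1 - p.1))))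
      (Ioo (0 : ℝ) 1 ×ˢ Ioi (0 : ℝ)) {q : ℝ × ℝ | 0 < q.2 ∧ q.2 < q.1} ∧
    ∀ u v : ℝ, 0 < v → v < u →
      ∃! p : ℝ × ℝ, p ∈ Ioo (0 : ℝ) 1 ×ˢ Ioi (0 : ℝ) ∧
        p.2 * p.1 / (1 - p.1) = u ∧ -(p.2 * Real.log (1 - p.1)) = v := by
  have hbij : Set.BijOn (fun p : ℝ × ℝ => (p.2 * p.1 / (1 - p.1), -(p.2 * Real.log (1 - p.1))))
      (Ioo (0 : ℝ) 1 ×ˢ Ioi (0 : ℝ)) {q : ℝ × ℝ | 0 < q.2 ∧ q.2 < q.1} := by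
    constructor
    · -- MapsTo
      rintro ⟨z, w⟩ ⟨⟨hz0, hz1⟩, hw⟩
      have h1z : (0:ℝ) < 1 - z := by linarith
      have hw' : (0:ℝ) < w := hw
      have hlog : Real.log (1 - z) < 0 := Real.log_neg h1z (by linarith)
      constructor
      · simp only
        nlinarith
      · simp only
        have hlt : -Real.log (1 - z) < z / (1 - z) := by
          have h := Real.log_lt_sub_one_of_pos (x := (1 - z)⁻¹) (by positivity)
            (by intro h; rw [inv_eq_one] at h; linarith)
          rw [Real.log_inv] at h
          have : (1 - z)⁻¹ - 1 = z / (1 - z) := by field_simp; ring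
          linarith [this ▸ h]
        have := mul_lt_mul_of_pos_left hlt hw'
        calc -(w * Real.log (1 - z)) = w * (-Real.log (1 - z)) := by ring
          _ < w * (z / (1 - z)) := this
          _ = w * z / (1 - z) := by ring
    constructor
    · -- InjOn
      rintro ⟨z1, w1⟩ ⟨⟨hz10, hz11⟩, hw1⟩ ⟨z2, w2⟩ ⟨⟨hz20, hz21⟩, hw2⟩ heq
      simp only [Prod.mk.injEq] at heq
      obtain ⟨hu, hv⟩ := heq
      set t1 := -Real.log (1 - z1) with ht1_def
      set t2 := -Real.log (1 - z2) with ht2_def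
      have hw1' : (0:ℝ) < w1 := hw1
      have hw2' : (0:ℝ) < w2 := hw2
      have h1z1 : (0:ℝ) < 1 - z1 := by linarith
      have h1z2 : (0:ℝ) < 1 - z2 := by linarith
      have ht1 : 0 < t1 := by
        have := Real.log_neg h1z1 (by linarith); simp [ht1_def]; linarith
      have ht2 : 0 < t2 := by
        have := Real.log_neg h1z2 (by linarith); simp [ht2_def]; linarith
      have hk1 : z1 / (1 - z1) = Real.exp t1 - 1 := key_eq hz10 hz11
      have hk2 : z2 / (1 - z2) = Real.exp t2 - 1 := key_eq hz20 hz21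
      have hu' : w1 * (Real.exp t1 - 1) = w2 * (Real.exp t2 - 1) := by
        rw [← hk1, ← hk2]
        calc w1 * (z1 / (1 - z1)) = w1 * z1 / (1 - z1) := by ring
          _ = w2 * z2 / (1 - z2) := hu
          _ = w2 * (z2 / (1 - z2)) := by ring
      have hv' : w1 * t1 = w2 * t2 := by
        simp only [ht1_def, ht2_def]; linarith [hv]
      have hg : gfun t1 = gfun t2 := by
        rw [gfun, gfun, div_eq_div_iff ht1.ne' ht2.ne']
        have h3 : w1 * ((Real.exp t1 - 1) * t2) = w1 * ((Real.exp t2 - 1) * t1) := by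
          linear_combination t2 * hu' - (Real.exp t2 - 1) * hv'
        exact mul_left_cancel₀ hw1'.ne' h3
      have htt : t1 = t2 := gfun_strictMono.injOn ht1 ht2 hg
      have hzz : z1 = z2 := by
        have e1 : Real.exp (Real.log (1 - z1)) = 1 - z1 := Real.exp_log h1z1
        have e2 : Real.exp (Real.log (1 - z2)) = 1 - z2 := Real.exp_log h1z2
        have : Real.log (1 - z1) = Real.log (1 - z2) := by
          have := htt; simp only [ht1_def, ht2_def] at this; linarith
        rw [this, e2] at e1; linarith
      have hww : w1 = w2 := by
        rw [htt] at hv'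
        exact mul_right_cancel₀ ht2.ne' hv'
      exact Prod.ext hzz hww
    · -- SurjOn
      rintro ⟨u, v⟩ ⟨hv, hvu⟩
      simp only [mem_setOf_eq] at hv hvu
      have hr : 1 < u / v := (one_lt_div hv).mpr hvu
      obtain ⟨t, ht, hgt⟩ := gfun_surj hr
      have hexp : Real.exp t - 1 = u * t / v := by
        rw [gfun, div_eq_iff ht.ne'] at hgt
        rw [hgt]; ring
      refine ⟨(1 - Real.exp (-t), v / t), ⟨⟨?_, ?_⟩, ?_⟩, ?_⟩
      · have : Real.exp (-t) < 1 := Real.exp_lt_one_iff.mpr (by linarith)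
        simpa using this
      · have : (0:ℝ) < Real.exp (-t) := Real.exp_pos _
        simp only [mem_Ioo] at *
        linarith
      · exact div_pos hv ht
      · have h1z : 1 - (1 - Real.exp (-t)) = Real.exp (-t) := by ring
        have hlog : Real.log (1 - (1 - Real.exp (-t))) = -t := by
          rw [h1z, Real.log_exp]
        simp only [Prod.mk.injEq]
        constructor
        · rw [h1z, Real.exp_neg, mul_div_assoc]
          have hep : (0:ℝ) < Real.exp t := Real.exp_pos t
          have h4 : (1 - (Real.exp t)⁻¹) / (Real.exp t)⁻¹ = Real.exp t - 1 := by
            field_simp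
          rw [h4, hexp]
          field_simp
        · rw [hlog]
          field_simp
  refine ⟨hbij, fun u v hv hvu => ?_⟩
  have hmem : ((u, v) : ℝ × ℝ) ∈ {q : ℝ × ℝ | 0 < q.2 ∧ q.2 < q.1} := ⟨hv, hvu⟩
  obtain ⟨p, hp, hpe⟩ := hbij.surjOn hmem
  refine ⟨p, ⟨hp, ?_, ?_⟩, ?_⟩
  · exact congrArg Prod.fst hpe
  · exact congrArg Prod.snd hpe
  · rintro q ⟨hq, hq1, hq2⟩
    apply hbij.injOn hq hp
    rw [hpe]
    exact Prod.ext hq1 hq2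
end
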